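/- Let τ ∈ (0,1] and let N ≥ 2 be an integer. Then for all real x, R_N^1(x) = R_N^1(0) - √(2/π) · ((τ/2)^{N-3/2}/(1+τ)) · (N/(N-2)!) · ∫₀ˣ e^{-N u²/(1+τ)} H_{N-2}(√(N/(2τ)) u) H_{N-1}(√(N/(2τ)) u) du, where R_N^1(x) := √(N/(2π)) e^{-N x²/(1+τ)} Σ_{k=0}^{N-2} ((τ/2)^k/k!) H_k(√(N/(2τ)) x)². -/

import Mathlib

open Real MeasureTheory

/-- Physicists' Hermite polynomials: H₀ = 1, H₁ = 2x, H_{n+2} = 2x H_{n+1} - 2(n+1) H_n. -/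
noncomputable def Hp : ℕ → ℝ → ℝ
  | 0 => fun _ => 1
  | 1 => fun x => 2*x
  | n+2 => fun x => 2*x*Hp (n+1) x - 2*(n+1)*Hp n x

lemma hp_rec (n : ℕ) (x : ℝ) : Hp (n+1) x = 2*x*Hp n x - 2*n*Hp (n-1) x := by
  cases n with
  | zero => simp [Hp]
  | succ n => show Hp (n+2) x = _; simp only [Hp]; push_cast; ring

lemma hp_pair (n : ℕ) : (∀ x, HasDerivAt (Hp n) (2*n*Hp (n-1) x) x) ∧
    (∀ x, HasDerivAt (Hp (n+1)) (2*(n+1)*Hp n x) x) := by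
  induction n with
  | zero =>
    constructor
    · intro x; simpa [Hp] using (hasDerivAt_const x (1:ℝ))
    · intro x
      have : HasDerivAt (fun y : ℝ => 2*y) 2 x := by
        simpa using (hasDerivAt_id x).const_mul 2
      simpa [Hp] using this
  | succ n ih =>
    refine ⟨by simpa using ih.2, fun x => ?_⟩
    have h1 := ih.2 x; have h0 := ih.1 x
    have hD : HasDerivAt (Hp (n+2))
        ((2*Hp (n+1) x + 2*x*(2*(n+1)*Hp n x)) - 2*(n+1)*(2*n*Hp (n-1) x)) x := by
      have : Hp (n+2) = fun y => 2*y*Hp (n+1) y - 2*(n+1)*Hp n y := rfl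
      rw [this]
      exact ((((hasDerivAt_id x).const_mul 2).mul h1).sub (h0.const_mul ((2:ℝ)*(n+1)))).congr_deriv (by simp only [id]; ring)
    convert hD using 1
    have h := hp_rec n x
    push_cast
    nlinarith [h]

lemma hp_hasDerivAt (n : ℕ) (x : ℝ) : HasDerivAt (Hp n) (2*n*Hp (n-1) x) x := (hp_pair n).1 x

lemma hp_continuous (n : ℕ) : Continuous (Hp n) :=
  continuous_iff_continuousAt.2 fun x => (hp_hasDerivAt n x).continuousAt

lemma key_identity (τ : ℝ) (hτ : 0 < τ) (m : ℕ) (y : ℝ) :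
    (1+τ) * ∑ k ∈ Finset.range (m+1),
        ((τ/2)^k / (Nat.factorial k : ℝ)) * (2*k*Hp (k-1) y * Hp k y)
      = 2*τ*y * (∑ k ∈ Finset.range (m+1), ((τ/2)^k / (Nat.factorial k : ℝ)) * (Hp k y)^2)
        - τ * ((τ/2)^m / (Nat.factorial m : ℝ)) * (Hp m y * Hp (m+1) y) := by
  induction m with
  | zero => norm_num [Hp]; ring
  | succ m ih =>
    rw [Finset.sum_range_succ, Finset.sum_range_succ (f := fun k => ((τ/2)^k / (Nat.factorial k : ℝ)) * (Hp k y)^2)]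
    have hrec : Hp (m+2) y = 2*y*Hp (m+1) y - 2*(m+1)*Hp m y := by
      simp only [Hp]
    have hfac : (Nat.factorial (m+1) : ℝ) = (m+1) * Nat.factorial m := by
      push_cast [Nat.factorial_succ]; ring
    have hfm : (Nat.factorial m : ℝ) ≠ 0 := Nat.cast_ne_zero.2 (Nat.factorial_ne_zero m)
    have hm1 : ((m:ℝ)+1) ≠ 0 := by positivity
    rw [mul_add, ih, hrec, hfac]
    simp only [Nat.add_sub_cancel, pow_succ]
    field_simp
    push_cast
    ring

lemma const_eq (τ : ℝ) (hτ0 : 0 < τ) (m : ℕ) (h1τ : (0:ℝ) < 1 + τ) :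
    Real.sqrt (((m+2:ℕ):ℝ)/(2*Real.pi)) * (2*τ*Real.sqrt (((m+2:ℕ):ℝ)/(2*τ))/(1+τ)) *
        ((τ/2)^m / (Nat.factorial m : ℝ))
      = Real.sqrt (2/Real.pi) * ((τ/2)^(((m+2:ℕ):ℝ)-3/2)/(1+τ)) *
        (((m+2:ℕ):ℝ)/(Nat.factorial m : ℝ)) := by
  have hπ := Real.pi_pos
  have hτ2 : (0:ℝ) < τ/2 := by linarith
  have hrp : (τ/2:ℝ)^(((m+2:ℕ):ℝ)-3/2) = (τ/2)^m * Real.sqrt (τ/2) := by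
    have he : ((m+2:ℕ):ℝ)-3/2 = (m:ℝ) + (1/2 : ℝ) := by push_cast; ring
    rw [he, Real.rpow_add hτ2, Real.rpow_natCast, Real.sqrt_eq_rpow]
  rw [hrp]
  have hmain : Real.sqrt (((m+2:ℕ):ℝ)/(2*Real.pi)) * (2*τ*Real.sqrt (((m+2:ℕ):ℝ)/(2*τ)))
      = Real.sqrt (2/Real.pi) * Real.sqrt (τ/2) * ((m+2:ℕ):ℝ) := by
    apply (sq_eq_sq₀ (by positivity) (by positivity)).1
    rw [mul_pow, mul_pow, mul_pow, mul_pow, mul_pow,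
      Real.sq_sqrt (by positivity), Real.sq_sqrt (by positivity),
      Real.sq_sqrt (by positivity), Real.sq_sqrt (by positivity)]
    push_cast
    field_simp
  have hfm : (Nat.factorial m : ℝ) ≠ 0 := Nat.cast_ne_zero.2 (Nat.factorial_ne_zero m)
  linear_combination ((τ/2)^m / (Nat.factorial m : ℝ) / (1+τ)) * hmain


/-- R_N^1, the first part of the (unnormalized) density of real eigenvalues. -/
noncomputable def R1 (N : ℕ) (τ : ℝ) (x : ℝ) : ℝ :=
  Real.sqrt (N/(2*Real.pi)) * Real.exp (-N*x^2/(1+τ)) *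
    ∑ k ∈ Finset.range (N-1),
      ((τ/2)^k / (Nat.factorial k : ℝ)) * (Hp k (Real.sqrt (N/(2*τ)) * x))^2

/-- Lemma (integral representation of R_N^1): for τ ∈ (0,1] and N ≥ 2,
R_N^1(x) = R_N^1(0) - √(2/π)((τ/2)^{N-3/2}/(1+τ))(N/(N-2)!)
  ∫₀ˣ e^{-Nu²/(1+τ)} H_{N-2}(√(N/2τ)u) H_{N-1}(√(N/2τ)u) du. -/
theorem R1_integral_representation (τ : ℝ) (hτ : τ ∈ Set.Ioc (0:ℝ) 1)
    (N : ℕ) (hN : 2 ≤ N) (x : ℝ) :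
    R1 N τ x = R1 N τ 0
      - Real.sqrt (2/Real.pi) * ((τ/2)^((N:ℝ)-3/2)/(1+τ)) * (N/(Nat.factorial (N-2) : ℝ)) *
        ∫ u in (0:ℝ)..x, Real.exp (-N*u^2/(1+τ))
          * Hp (N-2) (Real.sqrt (N/(2*τ)) * u) * Hp (N-1) (Real.sqrt (N/(2*τ)) * u) := by
  obtain ⟨hτ0, hτ1⟩ := hτ
  obtain ⟨m, rfl⟩ : ∃ m, N = m + 2 := ⟨N - 2, by omega⟩
  have h1τ : (0:ℝ) < 1 + τ := by linarith
  have hπ := Real.pi_pos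
  set c : ℝ := Real.sqrt (((m+2:ℕ):ℝ)/(2*τ)) with hc
  set K : ℝ := Real.sqrt (((m+2:ℕ):ℝ)/(2*Real.pi)) with hK
  have hc2 : c^2 = ((m+2:ℕ):ℝ)/(2*τ) := Real.sq_sqrt (by positivity)
  set C₀ : ℝ := K * (2*τ*c/(1+τ)) * ((τ/2)^m / (Nat.factorial m : ℝ)) with hC₀
  -- derivative of R1
  have hderiv : ∀ t : ℝ, HasDerivAt (R1 (m+2) τ)
      (-C₀ * (Real.exp (-((m+2:ℕ):ℝ)*t^2/(1+τ)) * Hp m (c*t) * Hp (m+1) (c*t))) t := by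
    intro t
    have hE : HasDerivAt (fun x : ℝ => Real.exp (-((m+2:ℕ):ℝ)*x^2/(1+τ)))
        (Real.exp (-((m+2:ℕ):ℝ)*t^2/(1+τ)) * (-((m+2:ℕ):ℝ)*(2*t)/(1+τ))) t := by
      have h1 : HasDerivAt (fun x : ℝ => -((m+2:ℕ):ℝ)*x^2/(1+τ))
          (-((m+2:ℕ):ℝ)*(2*t)/(1+τ)) t := by
        have hp2 : HasDerivAt (fun x : ℝ => x^2) (2*t) t := by
          simpa using hasDerivAt_pow 2 t
        exact (hp2.const_mul (-((m+2:ℕ):ℝ))).div_const (1+τ)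
      exact h1.exp
    have hS : HasDerivAt (fun x : ℝ => ∑ k ∈ Finset.range (m+1),
        ((τ/2)^k / (Nat.factorial k : ℝ)) * (Hp k (c*x))^2)
        (∑ k ∈ Finset.range (m+1),
          ((τ/2)^k / (Nat.factorial k : ℝ)) * (2 * Hp k (c*t) ^ 1 * (2*k*Hp (k-1) (c*t) * c))) t := by
      apply HasDerivAt.fun_sum
      intro k _
      have hck : HasDerivAt (fun x : ℝ => Hp k (c*x)) (2*k*Hp (k-1) (c*t) * c) t :=
        (hp_hasDerivAt k (c*t)).comp t (by simpa using (hasDerivAt_id t).const_mul c)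
      have := (hck.pow 2).const_mul ((τ/2)^k / (Nat.factorial k : ℝ))
      simpa using this
    have hR : R1 (m+2) τ = fun x : ℝ => (K * Real.exp (-((m+2:ℕ):ℝ)*x^2/(1+τ))) *
        ∑ k ∈ Finset.range (m+1),
          ((τ/2)^k / (Nat.factorial k : ℝ)) * (Hp k (c*x))^2 := by
      funext y; show _ = (_ * _) * _
      simp only [R1, show m+2-1 = m+1 from rfl, mul_assoc]
      rfl
    rw [hR]
    have hD : HasDerivAt (fun x : ℝ => (K * Real.exp (-((m+2:ℕ):ℝ)*x^2/(1+τ))) *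
        ∑ k ∈ Finset.range (m+1),
          ((τ/2)^k / (Nat.factorial k : ℝ)) * (Hp k (c*x))^2) _ t := (hE.const_mul K).mul hS
    convert hD using 1
    -- algebraic identity
    have hkey := key_identity τ hτ0 m (c*t)
    set E := Real.exp (-((m+2:ℕ):ℝ)*t^2/(1+τ))
    set S := ∑ k ∈ Finset.range (m+1), ((τ/2)^k / (Nat.factorial k : ℝ)) * (Hp k (c*t))^2
    have hT : (∑ k ∈ Finset.range (m+1),
        ((τ/2)^k / (Nat.factorial k : ℝ)) * (2 * Hp k (c*t) ^ 1 * (2*k*Hp (k-1) (c*t) * c)))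
        = 2*c*(∑ k ∈ Finset.range (m+1),
            ((τ/2)^k / (Nat.factorial k : ℝ)) * (2*k*Hp (k-1) (c*t) * Hp k (c*t))) := by
      rw [Finset.mul_sum]; apply Finset.sum_congr rfl; intros; ring
    rw [hT]
    set T := ∑ k ∈ Finset.range (m+1),
        ((τ/2)^k / (Nat.factorial k : ℝ)) * (2*k*Hp (k-1) (c*t) * Hp k (c*t))
    set a := (τ/2)^m / (Nat.factorial m : ℝ)
    set P := Hp m (c*t); set Q := Hp (m+1) (c*t)
    have hkey2 : T = (2*τ*(c*t)*S - τ*a*(P*Q))/(1+τ) := by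
      rw [eq_div_iff (ne_of_gt h1τ)]; linarith [hkey]
    rw [hC₀]
    push_cast at hc2 ⊢
    have hc3 : 2*τ*c^2 = ((m:ℝ)+2) := by
      rw [hc2]; push_cast; field_simp
    linear_combination (-(2*c*K*E)) * hkey2 - (2*K*E*t*S/(1+τ)) * hc3
  -- FTC
  have hcont : Continuous (fun t : ℝ =>
      -C₀ * (Real.exp (-((m+2:ℕ):ℝ)*t^2/(1+τ)) * Hp m (c*t) * Hp (m+1) (c*t))) := by
    have h1 : Continuous fun t : ℝ => Real.exp (-((m+2:ℕ):ℝ)*t^2/(1+τ)) := by continuity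
    have h2 : Continuous fun t : ℝ => Hp m (c*t) := (hp_continuous m).comp (by continuity)
    have h3 : Continuous fun t : ℝ => Hp (m+1) (c*t) := (hp_continuous (m+1)).comp (by continuity)
    exact continuous_const.mul ((h1.mul h2).mul h3)
  have hFTC := intervalIntegral.integral_eq_sub_of_hasDerivAt
    (f := R1 (m+2) τ) (a := 0) (b := x)
    (fun t _ => hderiv t) (hcont.intervalIntegrable 0 x)
  rw [intervalIntegral.integral_const_mul] at hFTC
  have hconst : C₀ = Real.sqrt (2/Real.pi) * ((τ/2)^(((m+2:ℕ):ℝ)-3/2)/(1+τ)) *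
      (((m+2:ℕ):ℝ)/(Nat.factorial m : ℝ)) := by
    rw [hC₀, hK, hc]
    rw [← const_eq τ hτ0 m h1τ]
  have e2 : m + 2 - 2 = m := rfl
  have e1 : m + 2 - 1 = m + 1 := rfl
  rw [e2, e1, ← hconst]
  linarith [hFTC]
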